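/- Let h > 0, p, d ≥ 1, A(λ) = I_d λ^p + A_1 λ^{p−1} + … + A_p with A_1,…,A_p ∈ ℂ^{d×d}, and let R_1,…,R_p ∈ ℂ^{d×d} be right solvents of A(λ) with σ(A(·)) = ⋃_{k=1}^p σ(R_k). Suppose the block Vandermonde matrix V(e^{−hR_1},…,e^{−hR_p}) is invertible, and define Ψ(λ) = I_d λ^p + Ψ_1 λ^{p−1} + … + Ψ_p by [Ψ_p, …, Ψ_1] = −[e^{−phR_1}, …, e^{−phR_p}] V(e^{−hR_1},…,e^{−hR_p})^{−1}. Then σ(Ψ(·)) = {e^{−hλ} : λ ∈ σ(A(·))}. In particular, if every λ ∈ σ(A(·)) has Re λ < 0, then every μ ∈ σ(Ψ(·)) satisfies |μ| > 1, i.e. Ψ(λ) is Schur-stable. -/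

import Mathlib

open Matrix

abbrev Mat (d e : ℕ) := Matrix (Fin d) (Fin e) ℂ

/-- Evaluation of the monic λ-matrix `P(λ) = I_d λ^p + P_1 λ^{p-1} + … + P_p`,
where `P i` denotes `P_{i+1}`. -/
noncomputable def monicPoly (p d : ℕ) (P : Fin p → Mat d d) (z : ℂ) : Mat d d :=
  z ^ p • 1 + ∑ i : Fin p, z ^ (p - 1 - (i : ℕ)) • P i

/-- `R` is a right solvent of `I_d λ^p + A_1 λ^{p-1} + … + A_p`, where `A i = A_{i+1}`. -/
def IsRightSolvent (p d : ℕ) (A : Fin p → Mat d d) (R : Mat d d) : Prop :=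
  R ^ p + ∑ i : Fin p, A i * R ^ (p - 1 - (i : ℕ)) = 0

/-- The block Vandermonde matrix: the `(i,j)`-th `d×d` block is `S j ^ i` (0-indexed). -/
def vand (p d : ℕ) (S : Fin p → Mat d d) : Matrix (Fin p × Fin d) (Fin p × Fin d) ℂ :=
  fun x y => (S y.1 ^ (x.1 : ℕ)) x.2 y.2

/-- The block row `(e^{-phR_1}, …, e^{-phR_p})`. -/
noncomputable def expRow (p d : ℕ) (h : ℝ) (R : Fin p → Mat d d) :
    Matrix (Fin d) (Fin p × Fin d) ℂ :=
  fun a y => (NormedSpace.exp ((-((p : ℝ) * h) : ℂ) • R y.1)) a y.2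


namespace Stmt6Aux

open NormedSpace

lemma pow_mulVec {d : ℕ} (N : Mat d d) (z : ℂ) (u : Fin d → ℂ)
    (hu : N *ᵥ u = z • u) : ∀ n : ℕ, (N ^ n) *ᵥ u = z ^ n • u := by
  intro n
  induction n with
  | zero => simp
  | succ n ih =>
    rw [pow_succ', ← Matrix.mulVec_mulVec, ih, Matrix.mulVec_smul, hu,
      smul_smul, ← pow_succ]

lemma exp_mulVec {d : ℕ} (N : Mat d d) (z : ℂ) (u : Fin d → ℂ)
    (hu : N *ᵥ u = z • u) :
    (NormedSpace.exp N) *ᵥ u = Complex.exp z • u := by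
  letI : SeminormedRing (Mat d d) := Matrix.linftyOpSemiNormedRing
  letI : NormedRing (Mat d d) := Matrix.linftyOpNormedRing
  letI : NormedAlgebra ℂ (Mat d d) := Matrix.linftyOpNormedAlgebra
  have hsum : Summable fun n : ℕ => ((Nat.factorial n : ℂ)⁻¹) • N ^ n := expSeries_summable' N
  let L : Mat d d →ₗ[ℂ] (Fin d → ℂ) :=
    { toFun := fun M => M *ᵥ u
      map_add' := fun M₁ M₂ => Matrix.add_mulVec _ _ _
      map_smul' := fun c M => Matrix.smul_mulVec c M u }
  let L' : Mat d d →L[ℂ] (Fin d → ℂ) := LinearMap.toContinuousLinearMap L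
  have h1 : (exp N) *ᵥ u = ∑' n : ℕ, ((Nat.factorial n : ℂ)⁻¹) • ((N ^ n) *ᵥ u) := by
    rw [exp_eq_tsum (𝕂 := ℂ)]
    have := L'.map_tsum hsum
    simpa [L', L, Matrix.smul_mulVec] using this
  rw [h1]
  have h2 : ∀ n : ℕ, ((Nat.factorial n : ℂ)⁻¹) • ((N ^ n) *ᵥ u) = ((Nat.factorial n : ℂ)⁻¹ * z ^ n) • u := by
    intro n; rw [pow_mulVec N z u hu n, smul_smul]
  simp_rw [h2]
  have hz : Summable fun n : ℕ => (Nat.factorial n : ℂ)⁻¹ * z ^ n := by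
    simpa [smul_eq_mul] using expSeries_summable' (𝕂 := ℂ) z
  rw [hz.tsum_smul_const]
  congr 1
  rw [Complex.exp_eq_exp_ℂ, exp_eq_tsum (𝕂 := ℂ)]
  simp [smul_eq_mul]

lemma det_smul_one_sub_eq_zero_iff {d : ℕ} (M : Mat d d) (z : ℂ) :
    det (z • (1 : Mat d d) - M) = 0 ↔ z ∈ spectrum ℂ M := by
  rw [spectrum.mem_iff, Matrix.isUnit_iff_isUnit_det, isUnit_iff_ne_zero, not_ne_iff,
    Algebra.algebraMap_eq_smul_one]

lemma eig_of_det {d : ℕ} {M : Mat d d} {z : ℂ} (hz : det (z • (1 : Mat d d) - M) = 0) :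
    ∃ u : Fin d → ℂ, u ≠ 0 ∧ M *ᵥ u = z • u := by
  obtain ⟨u, hu0, hu⟩ := (Matrix.exists_mulVec_eq_zero_iff).mpr hz
  refine ⟨u, hu0, ?_⟩
  rw [Matrix.sub_mulVec, Matrix.smul_mulVec, Matrix.one_mulVec, sub_eq_zero] at hu
  exact hu.symm

lemma det_of_eig {d : ℕ} {M : Mat d d} {z : ℂ} {u : Fin d → ℂ} (hu0 : u ≠ 0)
    (hu : M *ᵥ u = z • u) : det (z • (1 : Mat d d) - M) = 0 := by
  refine (Matrix.exists_mulVec_eq_zero_iff).mp ⟨u, hu0, ?_⟩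
  rw [Matrix.sub_mulVec, Matrix.smul_mulVec, Matrix.one_mulVec, hu, sub_self]

lemma aeval_mulVec {d : ℕ} (N : Mat d d) (z : ℂ) (u : Fin d → ℂ)
    (hu : N *ᵥ u = z • u) (q : Polynomial ℂ) :
    (Polynomial.aeval N q) *ᵥ u = q.eval z • u := by
  induction q using Polynomial.induction_on' with
  | add f g hf hg => rw [map_add, Matrix.add_mulVec, hf, hg, Polynomial.eval_add, add_smul]
  | monomial n c =>
    rw [Polynomial.aeval_monomial, Polynomial.eval_monomial, ← Matrix.mulVec_mulVec,
      pow_mulVec N z u hu n, Matrix.mulVec_smul, Algebra.algebraMap_eq_smul_one,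
      Matrix.smul_mulVec, Matrix.one_mulVec, smul_smul, mul_comm c, ← smul_smul]

lemma exp_eq_aeval {d : ℕ} (N : Mat d d) :
    ∃ q : Polynomial ℂ, Polynomial.aeval N q = NormedSpace.exp N := by
  letI : SeminormedRing (Mat d d) := Matrix.linftyOpSemiNormedRing
  letI : NormedRing (Mat d d) := Matrix.linftyOpNormedRing
  letI : NormedAlgebra ℂ (Mat d d) := Matrix.linftyOpNormedAlgebra
  have hmem : exp N ∈ Algebra.adjoin ℂ {N} := by
    rw [exp_eq_tsum (𝕂 := ℂ)]
    show (∑' (n : ℕ), ((Nat.factorial n : ℂ)⁻¹) • N ^ n) ∈ Algebra.adjoin ℂ {N}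
    set S : Submodule ℂ (Mat d d) := Subalgebra.toSubmodule (Algebra.adjoin ℂ {N}) with hSdef
    have hS : IsClosed (S : Set (Mat d d)) := Submodule.closed_of_finiteDimensional S
    have hSmem : ∀ n : ℕ, ((Nat.factorial n : ℂ)⁻¹) • N ^ n ∈ S := fun n =>
      Submodule.smul_mem _ _ (Subalgebra.pow_mem _ (Algebra.self_mem_adjoin_singleton ℂ N) n)
    by_cases hsum : Summable fun n : ℕ => ((Nat.factorial n : ℂ)⁻¹) • N ^ n
    · refine hS.mem_of_tendsto hsum.hasSum.tendsto_sum_nat ?_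
      filter_upwards with n
      exact Submodule.sum_mem _ fun i _ => hSmem i
    · rw [tsum_eq_zero_of_not_summable hsum]; exact Submodule.zero_mem S
  rw [Algebra.adjoin_singleton_eq_range_aeval] at hmem
  obtain ⟨q, hq⟩ := hmem
  exact ⟨q, hq⟩

lemma det_exp_eq_zero_iff {d : ℕ} (hd : 0 < d) (N : Mat d d) (μ : ℂ) :
    det (μ • (1 : Mat d d) - NormedSpace.exp N) = 0 ↔
      ∃ z : ℂ, det (z • (1 : Mat d d) - N) = 0 ∧ μ = Complex.exp z := by
  haveI : NeZero d := ⟨hd.ne'⟩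
  constructor
  · intro hdet
    letI : SeminormedRing (Mat d d) := Matrix.linftyOpSemiNormedRing
    letI : NormedRing (Mat d d) := Matrix.linftyOpNormedRing
    letI : NormedAlgebra ℂ (Mat d d) := Matrix.linftyOpNormedAlgebra
    obtain ⟨q, hq⟩ := exp_eq_aeval N
    have hμ : μ ∈ spectrum ℂ (Polynomial.aeval N q) := by
      rw [hq]; exact (det_smul_one_sub_eq_zero_iff _ _).mp hdet
    have hns : (spectrum ℂ N).Nonempty := spectrum.nonempty N
    rw [spectrum.map_polynomial_aeval_of_nonempty N q hns] at hμ
    obtain ⟨z, hz, hev⟩ := hμ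
    have hz' : det (z • (1 : Mat d d) - N) = 0 := (det_smul_one_sub_eq_zero_iff _ _).mpr hz
    obtain ⟨u, hu0, huN⟩ := eig_of_det hz'
    have h1 : (q.eval z) • u = Complex.exp z • u := by
      rw [← aeval_mulVec N z u huN q, hq, exp_mulVec N z u huN]
    obtain ⟨a, ha⟩ := Function.ne_iff.mp hu0
    have h2 : q.eval z = Complex.exp z := by
      have := congrFun h1 a
      simp only [Pi.smul_apply, smul_eq_mul] at this
      exact mul_right_cancel₀ ha this
    have hev' : q.eval z = μ := hev
    exact ⟨z, hz', by rw [← hev']; exact h2⟩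
  · rintro ⟨z, hz, rfl⟩
    obtain ⟨u, hu0, huN⟩ := eig_of_det hz
    exact det_of_eig hu0 (exp_mulVec N z u huN)

lemma det_monicPoly_eq_zero_of_solvent {p d : ℕ} (Ψ : Fin p → Mat d d) (S : Mat d d)
    (hsol : S ^ p + ∑ i : Fin p, Ψ i * S ^ (p - 1 - (i : ℕ)) = 0) (μ : ℂ)
    (hdet : det (μ • (1 : Mat d d) - S) = 0) : det (monicPoly p d Ψ μ) = 0 := by
  set x : Mat d d := μ • (1 : Mat d d) with hxdef
  have hx : ∀ n : ℕ, x ^ n = μ ^ n • 1 := fun n => by rw [hxdef, smul_pow, one_pow]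
  have hcomm : Commute x S := (Commute.one_left S).smul_left μ
  have key : ∀ n : ℕ, x ^ n - S ^ n =
      (∑ i ∈ Finset.range n, x ^ i * S ^ (n - 1 - i)) * (x - S) :=
    fun n => (hcomm.geom_sum₂_mul n).symm
  have hm : monicPoly p d Ψ μ = x ^ p + ∑ i : Fin p, Ψ i * x ^ (p - 1 - (i : ℕ)) := by
    rw [monicPoly]
    congr 1
    · rw [hx]
    · exact Finset.sum_congr rfl fun i _ => by rw [hx, mul_smul_comm, mul_one]
  have hsplit : monicPoly p d Ψ μ =
      (x ^ p - S ^ p) + ∑ i : Fin p, Ψ i * (x ^ (p - 1 - (i : ℕ)) - S ^ (p - 1 - (i : ℕ))) := by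
    have hsw : (x ^ p - S ^ p) + ∑ i : Fin p, Ψ i * (x ^ (p - 1 - (i : ℕ)) - S ^ (p - 1 - (i : ℕ)))
        = (x ^ p + ∑ i : Fin p, Ψ i * x ^ (p - 1 - (i : ℕ)))
          - (S ^ p + ∑ i : Fin p, Ψ i * S ^ (p - 1 - (i : ℕ))) := by
      simp only [mul_sub]
      rw [Finset.sum_sub_distrib]
      abel
    rw [hm, hsw, hsol, sub_zero]
  have hfac : monicPoly p d Ψ μ =
      ((∑ i ∈ Finset.range p, x ^ i * S ^ (p - 1 - i)) +
        ∑ i : Fin p, Ψ i * ∑ t ∈ Finset.range (p - 1 - (i : ℕ)),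
          x ^ t * S ^ (p - 1 - (i : ℕ) - 1 - t)) * (x - S) := by
    rw [hsplit, key p]
    have hterm : ∀ i : Fin p, Ψ i * (x ^ (p - 1 - (i : ℕ)) - S ^ (p - 1 - (i : ℕ))) =
        Ψ i * (∑ t ∈ Finset.range (p - 1 - (i : ℕ)), x ^ t * S ^ (p - 1 - (i : ℕ) - 1 - t))
          * (x - S) := fun i => by rw [key (p - 1 - (i : ℕ)), ← mul_assoc]
    simp_rw [hterm]
    rw [← Finset.sum_mul, ← add_mul]
  rw [hfac, det_mul, hdet, mul_zero]

lemma sum_mulVec {ι : Type*} (s : Finset ι) {d e : ℕ} (M : ι → Mat d e) (w : Fin e → ℂ) :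
    (∑ i ∈ s, M i) *ᵥ w = ∑ i ∈ s, (M i) *ᵥ w := by
  ext a
  simp only [Matrix.mulVec, dotProduct, Matrix.sum_apply, Finset.sum_apply,
    Finset.sum_mul]
  exact Finset.sum_comm

lemma mulVec_sum {ι : Type*} (s : Finset ι) {d e : ℕ} (M : Mat d e) (w : ι → Fin e → ℂ) :
    M *ᵥ (∑ i ∈ s, w i) = ∑ i ∈ s, M *ᵥ w i := by
  ext a
  simp only [Matrix.mulVec, dotProduct, Finset.sum_apply, Finset.mul_sum]
  exact Finset.sum_comm

lemma exists_block_eig {p d : ℕ} (hp : 0 < p) (Ψ S : Fin p → Mat d d)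
    (hsol : ∀ k, S k ^ p + ∑ i : Fin p, Ψ i * (S k) ^ (p - 1 - (i : ℕ)) = 0)
    (hV : IsUnit (vand p d S)) (μ : ℂ) (hdet : det (monicPoly p d Ψ μ) = 0) :
    ∃ k, det (μ • (1 : Mat d d) - S k) = 0 := by
  obtain ⟨v, hv0, hv⟩ := (Matrix.exists_mulVec_eq_zero_iff).mpr hdet
  set V := vand p d S with hVdef
  have hVdet : IsUnit V.det := (Matrix.isUnit_iff_isUnit_det V).mp hV
  set x : (Fin p × Fin d) → ℂ := fun q => μ ^ (q.1 : ℕ) * v q.2 with hxdef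
  set y : (Fin p × Fin d) → ℂ := V⁻¹ *ᵥ x with hydef
  set w : Fin p → Fin d → ℂ := fun l c => y (l, c) with hwdef
  have hVy : V *ᵥ y = x := by
    rw [hydef, Matrix.mulVec_mulVec, Matrix.mul_nonsing_inv _ hVdet, Matrix.one_mulVec]
  -- the coefficient relation from `monicPoly Ψ μ *ᵥ v = 0`
  have hcoef : μ ^ p • v + ∑ i : Fin p, μ ^ (p - 1 - (i : ℕ)) • ((Ψ i) *ᵥ v) = 0 := by
    have : monicPoly p d Ψ μ *ᵥ v =
        μ ^ p • v + ∑ i : Fin p, μ ^ (p - 1 - (i : ℕ)) • ((Ψ i) *ᵥ v) := by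
      rw [monicPoly, Matrix.add_mulVec, Matrix.smul_mulVec, Matrix.one_mulVec,
        sum_mulVec]
      congr 1
      exact Finset.sum_congr rfl fun i _ => Matrix.smul_mulVec _ _ _
    rw [← this, hv]
  -- block rows of `V *ᵥ y = x`
  have hrow : ∀ m : ℕ, m < p → (∑ l : Fin p, (S l ^ m) *ᵥ w l) = μ ^ m • v := by
    intro m hm
    funext a
    have h1 := congrFun hVy (⟨m, hm⟩, a)
    simp only [Matrix.mulVec, dotProduct, hVdef, vand, hxdef] at h1
    rw [Fintype.sum_prod_type] at h1
    simp only [Finset.sum_apply, Matrix.mulVec, dotProduct, Pi.smul_apply,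
      smul_eq_mul]
    exact h1
  have hrowp : (∑ l : Fin p, (S l ^ p) *ᵥ w l) = μ ^ p • v := by
    have hSl : ∀ l : Fin p, (S l ^ p) *ᵥ w l =
        -∑ i : Fin p, (Ψ i) *ᵥ ((S l ^ (p - 1 - (i : ℕ))) *ᵥ w l) := by
      intro l
      have h2 : S l ^ p = -(∑ i : Fin p, Ψ i * S l ^ (p - 1 - (i : ℕ))) :=
        eq_neg_of_add_eq_zero_left (hsol l)
      rw [h2, Matrix.neg_mulVec, sum_mulVec]
      congr 1
      exact Finset.sum_congr rfl fun i _ => by rw [← Matrix.mulVec_mulVec]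
    simp_rw [hSl]
    rw [Finset.sum_neg_distrib]
    conv_lhs => rw [Finset.sum_comm]
    have h3 : ∀ i : Fin p, (∑ l : Fin p, (Ψ i) *ᵥ ((S l ^ (p - 1 - (i : ℕ))) *ᵥ w l)) =
        μ ^ (p - 1 - (i : ℕ)) • ((Ψ i) *ᵥ v) := by
      intro i
      rw [← mulVec_sum, hrow (p - 1 - (i : ℕ)) (by omega), Matrix.mulVec_smul]
    simp_rw [h3]
    rw [neg_eq_iff_add_eq_zero, add_comm]
    exact hcoef
  have hrowAll : ∀ m : ℕ, m ≤ p → (∑ l : Fin p, (S l ^ m) *ᵥ w l) = μ ^ m • v := by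
    intro m hm
    rcases lt_or_eq_of_le hm with h | h
    · exact hrow m h
    · subst h; exact hrowp
  -- the defect vector
  set z : (Fin p × Fin d) → ℂ := fun q => (S q.1 *ᵥ w q.1) q.2 - μ * w q.1 q.2 with hzdef
  have hVz : V *ᵥ z = 0 := by
    funext q
    obtain ⟨i, a⟩ := q
    show ∑ r : Fin p × Fin d, V (⟨i, a⟩ : Fin p × Fin d) r * z r = 0
    rw [Fintype.sum_prod_type]
    have h4 : ∀ l : Fin p, (∑ c : Fin d, V (⟨i, a⟩ : Fin p × Fin d) (l, c) * z (l, c)) =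
        ((S l ^ ((i : ℕ) + 1)) *ᵥ w l) a - μ * ((S l ^ (i : ℕ)) *ᵥ w l) a := by
      intro l
      have hVe : ∀ c : Fin d, V (⟨i, a⟩ : Fin p × Fin d) (l, c) = (S l ^ (i : ℕ)) a c :=
        fun c => rfl
      have hze : ∀ c : Fin d, z (l, c) = (S l *ᵥ w l) c - μ * w l c := fun c => rfl
      simp only [hVe, hze, mul_sub, Finset.sum_sub_distrib]
      congr 1
      · rw [pow_succ, ← Matrix.mulVec_mulVec]
        rfl
      · show _ = μ * ∑ c : Fin d, (S l ^ (i : ℕ)) a c * w l c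
        rw [Finset.mul_sum]
        exact Finset.sum_congr rfl fun c _ => by ring
    simp_rw [h4]
    rw [Finset.sum_sub_distrib]
    have h5 := congrFun (hrowAll ((i : ℕ) + 1) (by omega)) a
    have h6 := congrFun (hrowAll (i : ℕ) (by omega)) a
    simp only [Finset.sum_apply, Pi.smul_apply, smul_eq_mul] at h5 h6
    rw [h5, ← Finset.mul_sum, h6]
    ring
  have hz0 : z = 0 := by
    have := congrArg (fun u => V⁻¹ *ᵥ u) hVz
    simpa [Matrix.mulVec_mulVec, Matrix.nonsing_inv_mul _ hVdet, Matrix.one_mulVec,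
      Matrix.mulVec_zero] using this
  have heig : ∀ l : Fin p, S l *ᵥ w l = μ • w l := by
    intro l
    funext c
    have := congrFun hz0 (l, c)
    simp only [hzdef, Pi.zero_apply] at this
    simpa [sub_eq_zero] using this
  have hy0 : y ≠ 0 := by
    intro h0
    apply hv0
    funext a
    have := congrFun hVy (⟨0, hp⟩, a)
    rw [h0, Matrix.mulVec_zero] at this
    simpa [hxdef] using this.symm
  obtain ⟨q, hq⟩ := Function.ne_iff.mp hy0
  refine ⟨q.1, det_of_eig (u := w q.1) ?_ (heig q.1)⟩
  intro h0
  exact hq (by simpa [hwdef] using congrFun h0 q.2)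

end Stmt6Aux

open Stmt6Aux

theorem stmt_6 (p d : ℕ) (hp : 0 < p) (hd : 0 < d) (h : ℝ) (hh : 0 < h)
    (A : Fin p → Mat d d) (R : Fin p → Mat d d)
    (hR : ∀ k, IsRightSolvent p d A (R k))
    -- `σ(A(·)) = ⋃_{k=1}^p σ(R_k)`
    (hspec : ∀ z : ℂ, det (monicPoly p d A z) = 0 ↔
      ∃ k : Fin p, det (z • (1 : Mat d d) - R k) = 0)
    (hV : IsUnit (vand p d (fun k => NormedSpace.exp ((-h : ℂ) • R k))))
    -- `[Ψ_p, …, Ψ_1] = -[e^{-phR_1}, …, e^{-phR_p}] V(e^{-hR_1},…,e^{-hR_p})⁻¹`,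
    -- i.e. the `j`-th block column (0-indexed) of the right-hand side is `Ψ_{p-j}`,
    -- i.e. `Ψ j.rev` with `Ψ i = Ψ_{i+1}`
    (Ψ : Fin p → Mat d d)
    (hΨ : ∀ (j : Fin p) (a b : Fin d),
      Ψ j.rev a b =
        (-(expRow p d h R *
            (vand p d (fun k => NormedSpace.exp ((-h : ℂ) • R k)))⁻¹)) a (j, b)) :
    -- `σ(Ψ(·)) = {e^{-hλ} : λ ∈ σ(A(·))}`
    (∀ μ : ℂ, det (monicPoly p d Ψ μ) = 0 ↔
      ∃ z : ℂ, det (monicPoly p d A z) = 0 ∧ μ = Complex.exp (-(h : ℂ) * z)) ∧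
    -- in particular, `Re λ < 0` on `σ(A(·))` implies `Ψ(λ)` is Schur-stable
    ((∀ z : ℂ, det (monicPoly p d A z) = 0 → z.re < 0) →
      ∀ μ : ℂ, det (monicPoly p d Ψ μ) = 0 → 1 < ‖μ‖)  := by
  set S : Fin p → Mat d d := fun k => NormedSpace.exp ((-h : ℂ) • R k) with hSdef
  have hexp_p : ∀ k, NormedSpace.exp ((-((p : ℝ) * h) : ℂ) • R k) = S k ^ p := by
    intro k
    have harg : ((-((p : ℝ) * h) : ℂ)) • R k = p • ((-h : ℂ) • R k) := by
      rw [← Nat.cast_smul_eq_nsmul ℂ, smul_smul]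
      congr 1
      push_cast
      ring
    rw [harg, Matrix.exp_nsmul]
  -- `S k` is a right solvent of `Ψ`
  have hsolΨ : ∀ k, S k ^ p + ∑ i : Fin p, Ψ i * (S k) ^ (p - 1 - (i : ℕ)) = 0 := by
    intro k
    have hVdet : IsUnit (vand p d S).det := (Matrix.isUnit_iff_isUnit_det _).mp hV
    set Prow : Matrix (Fin d) (Fin p × Fin d) ℂ := fun a y => Ψ y.1.rev a y.2 with hProw
    have hPeq : Prow = -(expRow p d h R * (vand p d S)⁻¹) := by
      ext a y
      exact hΨ y.1 a y.2
    have hPV : Prow * vand p d S = -(expRow p d h R) := by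
      rw [hPeq, Matrix.neg_mul, Matrix.mul_assoc, Matrix.nonsing_inv_mul _ hVdet,
        Matrix.mul_one]
    have hM : ∑ j : Fin p, Ψ j.rev * S k ^ (j : ℕ) = -(S k ^ p) := by
      ext a b
      have h1 := congrFun (congrFun hPV a) (k, b)
      rw [Matrix.mul_apply, Fintype.sum_prod_type] at h1
      have h2 : ∀ j : Fin p, (∑ c : Fin d, Prow a (j, c) * vand p d S (j, c) (k, b)) =
          (Ψ j.rev * S k ^ (j : ℕ)) a b := by
        intro j
        rw [Matrix.mul_apply]
        rfl
      simp_rw [h2] at h1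
      rw [Matrix.sum_apply]
      rw [h1]
      have h3 : expRow p d h R a (k, b) = (S k ^ p) a b := by
        show (NormedSpace.exp ((-((p : ℝ) * h) : ℂ) • R k)) a b = _
        rw [hexp_p k]
      show -(expRow p d h R) a (k, b) = (-(S k ^ p)) a b
      simp only [Matrix.neg_apply, Pi.neg_apply, neg_inj]
      exact h3
    have hsum : ∑ j : Fin p, Ψ j.rev * S k ^ (j : ℕ) =
        ∑ i : Fin p, Ψ i * S k ^ (p - 1 - (i : ℕ)) := by
      refine Fintype.sum_equiv Fin.revPerm _ _ fun i => ?_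
      have h5 : p - 1 - ((Fin.rev i : Fin p) : ℕ) = (i : ℕ) := by
        rw [Fin.val_rev]
        have := i.isLt
        omega
      show Ψ i.rev * S k ^ ((i : Fin p) : ℕ) =
        Ψ (Fin.rev i) * S k ^ (p - 1 - ((Fin.rev i : Fin p) : ℕ))
      rw [h5]
    rw [← hsum, hM, add_neg_cancel]
  have hmain : ∀ μ : ℂ, det (monicPoly p d Ψ μ) = 0 ↔
      ∃ z : ℂ, det (monicPoly p d A z) = 0 ∧ μ = Complex.exp (-(h : ℂ) * z) := by
    intro μ
    constructor
    · intro hdet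
      obtain ⟨k, hk⟩ := exists_block_eig hp Ψ S hsolΨ hV μ hdet
      obtain ⟨ζ, hζ, hμ⟩ := (det_exp_eq_zero_iff hd ((-h : ℂ) • R k) μ).mp hk
      have hcne : (-(h : ℂ)) ≠ 0 := by
        simp only [ne_eq, neg_eq_zero, Complex.ofReal_eq_zero]
        exact hh.ne'
      set z : ℂ := ζ / (-(h : ℂ)) with hzdef
      have hζz : (-(h : ℂ)) * z = ζ := mul_div_cancel₀ ζ hcne
      have hfac : ζ • (1 : Mat d d) - (-h : ℂ) • R k =
          (-(h : ℂ)) • (z • (1 : Mat d d) - R k) := by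
        rw [smul_sub, smul_smul, hζz]
      rw [hfac, Matrix.det_smul] at hζ
      have hzdet : det (z • (1 : Mat d d) - R k) = 0 := by
        have := pow_ne_zero (Fintype.card (Fin d)) hcne
        exact (mul_eq_zero.mp hζ).resolve_left this
      refine ⟨z, (hspec z).mpr ⟨k, hzdet⟩, ?_⟩
      rw [hμ, hζz]
    · rintro ⟨z, hz, rfl⟩
      obtain ⟨k, hk⟩ := (hspec z).mp hz
      obtain ⟨u, hu0, huR⟩ := eig_of_det hk
      have huS : S k *ᵥ u = Complex.exp (-(h : ℂ) * z) • u := by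
        have h1 : ((-h : ℂ) • R k) *ᵥ u = (-(h : ℂ) * z) • u := by
          rw [Matrix.smul_mulVec, huR, smul_smul]
        exact exp_mulVec _ _ _ h1
      exact det_monicPoly_eq_zero_of_solvent Ψ (S k) (hsolΨ k) _ (det_of_eig hu0 huS)
  refine ⟨hmain, ?_⟩
  intro hre μ hdet
  obtain ⟨z, hz, rfl⟩ := (hmain μ).mp hdet
  rw [Complex.norm_exp]
  rw [Real.one_lt_exp_iff]
  have hzre := hre z hz
  have : (-(h : ℂ) * z).re = -h * z.re := by
    simp [Complex.mul_re]
  rw [this]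
  nlinarith
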